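/- Let F be a measurable space, let E be a Polish space, let (ν^f)_{f ∈ F} be a family of probability measures on E such that f ↦ ν^f is a Markov kernel, and let ν̄ be a probability measure on E. Suppose sup_{f ∈ F} d_TV(ν^f, ν̄) ≤ ε, where d_TV(μ,ν) := sup_{A measurable} |μ(A) − ν(A)|. Then there exists a Markov kernel f ↦ ℙ^f from F to probability measures on E × E such that for every f ∈ F the first marginal of ℙ^f is ν^f, the second marginal of ℙ^f is ν̄, and ℙ^f( {(x,y) ∈ E × E : x ≠ y} ) ≤ ε. -/

import Mathlib

open MeasureTheory ProbabilityTheory Set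
open scoped ENNReal NNReal

section CouplingAux

variable {F : Type*} [MeasurableSpace F] {E : Type*} [MeasurableSpace E]
variable [MeasurableSpace.CountableOrCountablyGenerated F E]

/-- density of the first kernel w.r.t. the sum. -/
noncomputable def cplF1 (ν η : Kernel F E) : F → E → ℝ≥0∞ :=
  fun a x => (Real.toNNReal (Kernel.rnDerivAux ν (ν + η) a x) : ℝ≥0∞)

/-- density of the second kernel w.r.t. the sum. -/
noncomputable def cplF2 (ν η : Kernel F E) : F → E → ℝ≥0∞ :=
  fun a x => (Real.toNNReal (Kernel.rnDerivAux η (η + ν) a x) : ℝ≥0∞)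

/-- minimum of the two densities. -/
noncomputable def cplG (ν η : Kernel F E) : F → E → ℝ≥0∞ :=
  fun a x => min (cplF1 ν η a x) (cplF2 ν η a x)

/-- remainder density of the first kernel. -/
noncomputable def cplR1 (ν η : Kernel F E) : F → E → ℝ≥0∞ :=
  fun a x => cplF1 ν η a x - cplG ν η a x

/-- remainder density of the second kernel. -/
noncomputable def cplR2 (ν η : Kernel F E) : F → E → ℝ≥0∞ :=
  fun a x => cplF2 ν η a x - cplG ν η a x

variable (ν η : Kernel F E)

lemma cplF1_meas : Measurable (Function.uncurry (cplF1 ν η)) :=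
  (Kernel.measurable_rnDerivAux ν (ν + η)).real_toNNReal.coe_nnreal_ennreal

lemma cplF2_meas : Measurable (Function.uncurry (cplF2 ν η)) :=
  (Kernel.measurable_rnDerivAux η (η + ν)).real_toNNReal.coe_nnreal_ennreal

lemma cplG_meas : Measurable (Function.uncurry (cplG ν η)) :=
  (cplF1_meas ν η).min (cplF2_meas ν η)

lemma cplR1_meas : Measurable (Function.uncurry (cplR1 ν η)) := by
  change Measurable fun p : F × E =>
    Function.uncurry (cplF1 ν η) p - Function.uncurry (cplG ν η) p
  exact Measurable.sub (f := Function.uncurry (cplF1 ν η)) (g := Function.uncurry (cplG ν η))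
    (cplF1_meas ν η) (cplG_meas ν η)

lemma cplR2_meas : Measurable (Function.uncurry (cplR2 ν η)) := by
  change Measurable fun p : F × E =>
    Function.uncurry (cplF2 ν η) p - Function.uncurry (cplG ν η) p
  exact Measurable.sub (f := Function.uncurry (cplF2 ν η)) (g := Function.uncurry (cplG ν η))
    (cplF2_meas ν η) (cplG_meas ν η)

lemma cplF1_meas_right (a : F) : Measurable (cplF1 ν η a) := by
  change Measurable ((Function.uncurry (cplF1 ν η)) ∘ (fun x => (a, x)))
  exact (cplF1_meas ν η).comp measurable_prodMk_left

lemma cplF2_meas_right (a : F) : Measurable (cplF2 ν η a) := by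
  change Measurable ((Function.uncurry (cplF2 ν η)) ∘ (fun x => (a, x)))
  exact (cplF2_meas ν η).comp measurable_prodMk_left

lemma cplG_meas_right (a : F) : Measurable (cplG ν η a) := by
  change Measurable ((Function.uncurry (cplG ν η)) ∘ (fun x => (a, x)))
  exact (cplG_meas ν η).comp measurable_prodMk_left

lemma cplR1_meas_right (a : F) : Measurable (cplR1 ν η a) := by
  change Measurable ((Function.uncurry (cplR1 ν η)) ∘ (fun x => (a, x)))
  exact (cplR1_meas ν η).comp measurable_prodMk_left

lemma cplR2_meas_right (a : F) : Measurable (cplR2 ν η a) := by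
  change Measurable ((Function.uncurry (cplR2 ν η)) ∘ (fun x => (a, x)))
  exact (cplR2_meas ν η).comp measurable_prodMk_left

lemma cplG_ne_top (a : F) (x : E) : cplG ν η a x ≠ ∞ :=
  ne_top_of_le_ne_top ENNReal.coe_ne_top (min_le_left _ _)

lemma cplR1_ne_top (a : F) (x : E) : cplR1 ν η a x ≠ ∞ :=
  ne_top_of_le_ne_top ENNReal.coe_ne_top (tsub_le_self.trans (le_refl _))

lemma cplR2_ne_top (a : F) (x : E) : cplR2 ν η a x ≠ ∞ :=
  ne_top_of_le_ne_top ENNReal.coe_ne_top (tsub_le_self.trans (le_refl _))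

variable [IsFiniteKernel ν] [IsFiniteKernel η]

lemma cplF1_withDensity : Kernel.withDensity (ν + η) (cplF1 ν η) = ν :=
  Kernel.withDensity_rnDerivAux ν η

lemma cplF2_withDensity : Kernel.withDensity (ν + η) (cplF2 ν η) = η := by
  have h := Kernel.withDensity_rnDerivAux η ν
  ext a : 1
  have ha := Kernel.ext_iff.mp h a
  rw [Kernel.withDensity_apply
    (f := fun a x => ((Real.toNNReal (Kernel.rnDerivAux η (η + ν) a x)) : ℝ≥0∞)) _
    ((Kernel.measurable_rnDerivAux η (η + ν)).real_toNNReal.coe_nnreal_ennreal)] at ha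
  rw [Kernel.withDensity_apply _ (cplF2_meas ν η)]
  have hc : (η + ν) a = (ν + η) a := by rw [add_comm]
  rw [← hc]
  exact ha

lemma cplG_add_R1 (a : F) :
    Kernel.withDensity (ν + η) (cplG ν η) a + Kernel.withDensity (ν + η) (cplR1 ν η) a
      = ν a := by
  have hma : Measurable (cplR1 ν η a) := cplR1_meas_right ν η a
  calc Kernel.withDensity (ν + η) (cplG ν η) a + Kernel.withDensity (ν + η) (cplR1 ν η) a
      = ((ν + η) a).withDensity (cplG ν η a) + ((ν + η) a).withDensity (cplR1 ν η a) := by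
        rw [Kernel.withDensity_apply _ (cplG_meas ν η), Kernel.withDensity_apply _ (cplR1_meas ν η)]
    _ = ((ν + η) a).withDensity (cplG ν η a + cplR1 ν η a) :=
        (withDensity_add_right (cplG ν η a) hma).symm
    _ = ((ν + η) a).withDensity (cplF1 ν η a) := by
        congr 1
        funext x
        simp only [Pi.add_apply, cplR1, cplG]
        exact add_tsub_cancel_of_le (min_le_left _ _)
    _ = ν a := by rw [← Kernel.withDensity_apply _ (cplF1_meas ν η), cplF1_withDensity]

lemma cplG_add_R2 (a : F) :
    Kernel.withDensity (ν + η) (cplG ν η) a + Kernel.withDensity (ν + η) (cplR2 ν η) a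
      = η a := by
  have hma : Measurable (cplR2 ν η a) := cplR2_meas_right ν η a
  calc Kernel.withDensity (ν + η) (cplG ν η) a + Kernel.withDensity (ν + η) (cplR2 ν η) a
      = ((ν + η) a).withDensity (cplG ν η a) + ((ν + η) a).withDensity (cplR2 ν η a) := by
        rw [Kernel.withDensity_apply _ (cplG_meas ν η), Kernel.withDensity_apply _ (cplR2_meas ν η)]
    _ = ((ν + η) a).withDensity (cplG ν η a + cplR2 ν η a) :=
        (withDensity_add_right (cplG ν η a) hma).symm
    _ = ((ν + η) a).withDensity (cplF2 ν η a) := by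
        congr 1
        funext x
        simp only [Pi.add_apply, cplR2, cplG]
        exact add_tsub_cancel_of_le (min_le_right _ _)
    _ = η a := by rw [← Kernel.withDensity_apply _ (cplF2_meas ν η), cplF2_withDensity]

end CouplingAux

/-- Measurable coupling lemma: if a Markov kernel `ν` is uniformly within total variation
distance `ε` of a fixed probability measure `ν̄` on a Polish space, then there is a Markov
kernel of couplings `ℙ^f` of `ν^f` and `ν̄` such that `ℙ^f(X ≠ Y) ≤ ε` for every `f`. -/
theorem coupling_measurability
    {F : Type*} [MeasurableSpace F]
    {E : Type*} [MeasurableSpace E] [TopologicalSpace E] [PolishSpace E] [BorelSpace E]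
    (ν : Kernel F E) (hν : IsMarkovKernel ν)
    (νbar : Measure E) (hνbar : IsProbabilityMeasure νbar)
    (ε : ℝ)
    (hTV : ∀ f : F, ∀ A : Set E, MeasurableSet A →
      |(ν f A).toReal - (νbar A).toReal| ≤ ε) :
    ∃ κ : Kernel F (E × E), IsMarkovKernel κ ∧
      ∀ f : F,
        Measure.map Prod.fst (κ f) = ν f ∧
        Measure.map Prod.snd (κ f) = νbar ∧
        κ f {p : E × E | p.1 ≠ p.2} ≤ ENNReal.ofReal ε := by
  classical
  set η : Kernel F E := Kernel.const F νbar with hη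
  have hηfin : IsFiniteKernel η := by rw [hη]; infer_instance
  set m : Kernel F E := Kernel.withDensity (ν + η) (cplG ν η) with hm
  set R1 : Kernel F E := Kernel.withDensity (ν + η) (cplR1 ν η) with hR1
  set R2 : Kernel F E := Kernel.withDensity (ν + η) (cplR2 ν η) with hR2
  have : IsSFiniteKernel m := Kernel.IsSFiniteKernel.withDensity _ (cplG_ne_top ν η)
  have : IsSFiniteKernel R1 := Kernel.IsSFiniteKernel.withDensity _ (cplR1_ne_top ν η)
  have : IsSFiniteKernel R2 := Kernel.IsSFiniteKernel.withDensity _ (cplR2_ne_top ν η)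
  have hmR1 : ∀ a, m a + R1 a = ν a := cplG_add_R1 ν η
  have hmR2 : ∀ a, m a + R2 a = νbar := fun a => by
    rw [hm, hR2]
    rw [cplG_add_R2 ν η a, hη, Kernel.const_apply]
  -- masses
  set δ : F → ℝ≥0∞ := fun f => R1 f univ with hδ
  have hδ_meas : Measurable δ := R1.measurable_coe MeasurableSet.univ
  have hδ_le_one : ∀ f, δ f ≤ 1 := by
    intro f
    have h := congrArg (fun μ : Measure E => μ univ) (hmR1 f)
    simp only [Measure.add_apply] at h
    calc δ f ≤ m f univ + R1 f univ := le_add_self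
      _ = ν f univ := h
      _ = 1 := measure_univ
  have hδ_ne_top : ∀ f, δ f ≠ ∞ := fun f => ne_top_of_le_ne_top ENNReal.one_ne_top (hδ_le_one f)
  have hm_ne_top : ∀ f, m f univ ≠ ∞ := by
    intro f
    have h := congrArg (fun μ : Measure E => μ univ) (hmR1 f)
    simp only [Measure.add_apply] at h
    have : m f univ ≤ 1 := by
      calc m f univ ≤ m f univ + R1 f univ := le_self_add
        _ = ν f univ := h
        _ = 1 := measure_univ
    exact ne_top_of_le_ne_top ENNReal.one_ne_top this
  have hδ2 : ∀ f, R2 f univ = δ f := by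
    intro f
    have h1 := congrArg (fun μ : Measure E => μ univ) (hmR1 f)
    have h2 := congrArg (fun μ : Measure E => μ univ) (hmR2 f)
    simp only [Measure.add_apply] at h1 h2
    have : m f univ + R2 f univ = m f univ + R1 f univ := by
      rw [h1, h2, measure_univ, measure_univ]
    exact (ENNReal.add_right_inj (hm_ne_top f)).mp this
  -- TV bound
  have hδ1 : ∀ f, R1 f univ = δ f := fun f => rfl
  have hδ_le_ε : ∀ f, δ f ≤ ENNReal.ofReal ε := by
    intro f
    set A : Set E := {x | cplF2 ν η f x < cplF1 ν η f x} with hA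
    have hAm : MeasurableSet A :=
      measurableSet_lt (cplF2_meas_right ν η f) (cplF1_meas_right ν η f)
    have hR1c : R1 f Aᶜ = 0 := by
      rw [hR1, Kernel.withDensity_apply' _ (cplR1_meas ν η) f Aᶜ]
      have hz : ∀ x ∈ Aᶜ, cplR1 ν η f x = 0 := by
        intro x hx
        simp only [hA, mem_compl_iff, mem_setOf_eq, not_lt] at hx
        simp only [cplR1, cplG]
        rw [min_eq_left hx, tsub_self]
      calc ∫⁻ x in Aᶜ, cplR1 ν η f x ∂(ν + η) f
          = ∫⁻ _ in Aᶜ, 0 ∂(ν + η) f := setLIntegral_congr_fun hAm.compl hz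
        _ = 0 := by simp
    have hR2A : R2 f A = 0 := by
      rw [hR2, Kernel.withDensity_apply' _ (cplR2_meas ν η) f A]
      have hz : ∀ x ∈ A, cplR2 ν η f x = 0 := by
        intro x hx
        simp only [hA, mem_setOf_eq] at hx
        simp only [cplR2, cplG]
        rw [min_eq_right hx.le, tsub_self]
      calc ∫⁻ x in A, cplR2 ν η f x ∂(ν + η) f
          = ∫⁻ _ in A, 0 ∂(ν + η) f := setLIntegral_congr_fun hAm hz
        _ = 0 := by simp
    have hδA : δ f = R1 f A := by
      have h := measure_add_measure_compl (μ := R1 f) hAm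
      rw [hR1c, add_zero] at h
      rw [← hδ1 f, ← h]
    have hνA : ν f A = m f A + R1 f A := by
      have h := congrArg (fun μ : Measure E => μ A) (hmR1 f)
      simp only [Measure.add_apply] at h
      exact h.symm
    have hbarA : νbar A = m f A := by
      have h := congrArg (fun μ : Measure E => μ A) (hmR2 f)
      simp only [Measure.add_apply] at h
      rw [← h, hR2A, add_zero]
    have hmA_ne : m f A ≠ ∞ :=
      ne_top_of_le_ne_top (measure_ne_top νbar A) (le_of_eq hbarA.symm)
    have hkey : ν f A = νbar A + δ f := by rw [hνA, hbarA, hδA]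
    have htoReal : (ν f A).toReal = (νbar A).toReal + (δ f).toReal := by
      rw [hkey, ENNReal.toReal_add (measure_ne_top νbar A) (hδ_ne_top f)]
    have habs := hTV f A hAm
    have : (δ f).toReal ≤ ε := by
      have h1 : (ν f A).toReal - (νbar A).toReal = (δ f).toReal := by
        rw [htoReal]; ring
      calc (δ f).toReal = (ν f A).toReal - (νbar A).toReal := h1.symm
        _ ≤ |(ν f A).toReal - (νbar A).toReal| := le_abs_self _
        _ ≤ ε := habs
    calc δ f = ENNReal.ofReal (δ f).toReal := (ENNReal.ofReal_toReal (hδ_ne_top f)).symm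
      _ ≤ ENNReal.ofReal ε := ENNReal.ofReal_le_ofReal this
  -- construction of the coupling kernel
  set P : Kernel F (E × E) := R1 ×ₖ R2 with hP
  have hPsf : IsSFiniteKernel P := by rw [hP, Kernel.prod]; infer_instance
  set c : F → E × E → ℝ≥0∞ := fun f _ => (δ f)⁻¹ with hc
  have hcm : Measurable (Function.uncurry c) := by
    change Measurable fun p : F × (E × E) => (δ p.1)⁻¹
    exact (hδ_meas.comp measurable_fst).inv
  set K2 : Kernel F (E × E) := Kernel.withDensity P c with hK2
  have hdiag : Measurable (fun x : E => (x, x)) := measurable_id.prodMk measurable_id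
  set K1 : Kernel F (E × E) := Kernel.map m (fun x => (x, x)) with hK1
  have hK1f : ∀ f, K1 f = (m f).map (fun x => (x, x)) := fun f => by
    rw [hK1]; exact Kernel.map_apply m hdiag f
  have hK2f : ∀ f, K2 f = (δ f)⁻¹ • ((R1 f).prod (R2 f)) := fun f => by
    rw [hK2, Kernel.withDensity_apply _ hcm, hP, Kernel.prod_apply]
    show ((R1 f).prod (R2 f)).withDensity (fun _ => (δ f)⁻¹) = _
    exact withDensity_const _
  have hK1univ : ∀ f, K1 f univ = m f univ := fun f => by
    rw [hK1f f, Measure.map_apply hdiag MeasurableSet.univ, preimage_univ]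
  have hK2univ : ∀ f, K2 f univ = (δ f)⁻¹ * (δ f * δ f) := fun f => by
    rw [hK2f f, Measure.smul_apply, smul_eq_mul, ← univ_prod_univ, Measure.prod_prod,
      hδ1 f, hδ2 f]
  have hmuniv : ∀ f, m f univ + δ f = 1 := fun f => by
    have h := congrArg (fun μ : Measure E => μ univ) (hmR1 f)
    simp only [Measure.add_apply] at h
    rw [← hδ1 f, h, measure_univ]
  have hSD : MeasurableSet {p : E × E | p.1 ≠ p.2} :=
    ((isClosed_diagonal (X := E)).measurableSet).compl
  refine ⟨K1 + K2, ?_, fun f => ⟨?_, ?_, ?_⟩⟩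
  · constructor
    intro f
    constructor
    rw [Kernel.add_apply, Measure.add_apply, hK1univ f, hK2univ f]
    by_cases hδ0 : δ f = 0
    · have h := hmuniv f
      rw [hδ0, add_zero] at h
      simp [hδ0, h]
    · rw [← mul_assoc, ENNReal.inv_mul_cancel hδ0 (hδ_ne_top f), one_mul]
      exact hmuniv f
  · -- first marginal
    rw [Kernel.add_apply, Measure.map_add _ _ measurable_fst]
    have h0 : Measure.map Prod.fst (K1 f) = m f := by
      rw [hK1f f, Measure.map_map measurable_fst hdiag]
      have h : Prod.fst ∘ (fun x : E => (x, x)) = id := rfl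
      rw [h, Measure.map_id]
    have h2 : Measure.map Prod.fst (K2 f) = (δ f)⁻¹ • (δ f • R1 f) := by
      rw [hK2f f, Measure.map_smul, Measure.map_fst_prod, hδ2 f]
    rw [h0, h2]
    by_cases hδ0 : δ f = 0
    · have hR10 : R1 f = 0 := Measure.measure_univ_eq_zero.mp (by rw [hδ1 f]; exact hδ0)
      have h := hmR1 f
      rw [hR10, add_zero] at h
      rw [hδ0, hR10]
      simpa using h
    · rw [smul_smul, ENNReal.inv_mul_cancel hδ0 (hδ_ne_top f), one_smul]
      exact hmR1 f
  · -- second marginal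
    rw [Kernel.add_apply, Measure.map_add _ _ measurable_snd]
    have h0 : Measure.map Prod.snd (K1 f) = m f := by
      rw [hK1f f, Measure.map_map measurable_snd hdiag]
      have h : Prod.snd ∘ (fun x : E => (x, x)) = id := rfl
      rw [h, Measure.map_id]
    have h2 : Measure.map Prod.snd (K2 f) = (δ f)⁻¹ • (δ f • R2 f) := by
      rw [hK2f f, Measure.map_smul, Measure.map_snd_prod, hδ1 f]
    rw [h0, h2]
    by_cases hδ0 : δ f = 0
    · have hR20 : R2 f = 0 := Measure.measure_univ_eq_zero.mp (by rw [hδ2 f]; exact hδ0)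
      have h := hmR2 f
      rw [hR20, add_zero] at h
      rw [hδ0, hR20]
      simpa using h
    · rw [smul_smul, ENNReal.inv_mul_cancel hδ0 (hδ_ne_top f), one_smul]
      exact hmR2 f
  · -- off-diagonal bound
    rw [Kernel.add_apply, Measure.add_apply]
    have h1 : K1 f {p : E × E | p.1 ≠ p.2} = 0 := by
      rw [hK1f f, Measure.map_apply hdiag hSD]
      have h : (fun x : E => (x, x)) ⁻¹' {p : E × E | p.1 ≠ p.2} = ∅ := by
        ext x; simp
      rw [h]
      exact measure_empty
    have h2 : K2 f {p : E × E | p.1 ≠ p.2} ≤ δ f := by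
      calc K2 f {p : E × E | p.1 ≠ p.2} ≤ K2 f univ := measure_mono (subset_univ _)
        _ = (δ f)⁻¹ * (δ f * δ f) := hK2univ f
        _ ≤ δ f := by
          by_cases hδ0 : δ f = 0
          · simp [hδ0]
          · rw [← mul_assoc, ENNReal.inv_mul_cancel hδ0 (hδ_ne_top f), one_mul]
    rw [h1, zero_add]
    exact h2.trans (hδ_le_ε f)
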